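/- For 0 < δ < p < 1 with p - δ > 0 and 1 - p + δ < 1, the exponent r(p, p-δ) = (log p · log(1-p+δ) - log(p-δ) · log(1-p)) / (log(p(1-p)) + log((p-δ)(1-p+δ))) satisfies r(p, p-δ) ≥ (1 - δ/p) · (δ·H_b(p) - δ²·log(1-p)) / (δ(1 - 2(p-δ)) - 2(p-δ)(1-p+δ)·log(p(1-p))), where H_b(p) = -p log p - (1-p) log(1-p). -/

import Mathlib

open Real

set_option maxHeartbeats 1000000 in
/-- Lower bound on the exponent `r(p, p-δ)` in terms of the binary entropy
`H_b(p) = -p log₂ p - (1-p) log₂(1-p)`. -/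
theorem exponent_lower_bound (p δ : ℝ) (h0 : 0 < δ) (hδp : δ < p) (hp1 : p < 1) :
    (1 - δ / p) *
        (δ * (-(p * logb 2 p) - (1 - p) * logb 2 (1 - p)) - δ ^ 2 * logb 2 (1 - p)) /
        (δ * (1 - 2 * (p - δ)) - 2 * (p - δ) * (1 - p + δ) * logb 2 (p * (1 - p)))
      ≤ (logb 2 p * logb 2 (1 - p + δ) - logb 2 (p - δ) * logb 2 (1 - p)) /
        (logb 2 (p * (1 - p)) + logb 2 ((p - δ) * (1 - p + δ))) := by
  have hp0 : 0 < p := h0.trans hδp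
  have hq0 : 0 < p - δ := sub_pos.2 hδp
  have h1p : 0 < 1 - p := by linarith
  have hs0 : 0 < 1 - p + δ := by linarith
  have hs1 : 1 - p + δ < 1 := by linarith
  have hq1 : p - δ < 1 := by linarith
  have hL2 : (0:ℝ) < Real.log 2 := Real.log_pos one_lt_two
  have hL2' : Real.log 2 ≤ 1 := by
    have h := Real.log_le_sub_one_of_pos (show (0:ℝ) < 2 by norm_num)
    linarith
  -- natural log bounds
  have A1 : δ / p ≤ Real.log p - Real.log (p - δ) := by
    have h := Real.log_le_sub_one_of_pos (div_pos hq0 hp0)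
    rw [Real.log_div hq0.ne' hp0.ne'] at h
    have e : (p - δ) / p - 1 = -(δ / p) := by field_simp; ring
    rw [e] at h; linarith
  have A2 : Real.log p - Real.log (p - δ) ≤ δ / (p - δ) := by
    have h := Real.log_le_sub_one_of_pos (div_pos hp0 hq0)
    rw [Real.log_div hp0.ne' hq0.ne'] at h
    have e : p / (p - δ) - 1 = δ / (p - δ) := by field_simp; ring
    rw [e] at h; linarith
  have A3 : δ / (1 - p + δ) ≤ Real.log (1 - p + δ) - Real.log (1 - p) := by
    have h := Real.log_le_sub_one_of_pos (div_pos h1p hs0)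
    rw [Real.log_div h1p.ne' hs0.ne'] at h
    have e : (1 - p) / (1 - p + δ) - 1 = -(δ / (1 - p + δ)) := by field_simp; ring
    rw [e] at h; linarith
  rw [Real.logb_mul hp0.ne' h1p.ne', Real.logb_mul hq0.ne' hs0.ne']
  set lp := logb 2 p with hlp
  set lq := logb 2 (1 - p) with hlq
  set lr := logb 2 (p - δ) with hlr
  set ls := logb 2 (1 - p + δ) with hls
  have elp : Real.log 2 * lp = Real.log p := by
    rw [hlp, Real.logb]; field_simp
  have elq : Real.log 2 * lq = Real.log (1 - p) := by
    rw [hlq, Real.logb]; field_simp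
  have elr : Real.log 2 * lr = Real.log (p - δ) := by
    rw [hlr, Real.logb]; field_simp
  have els : Real.log 2 * ls = Real.log (1 - p + δ) := by
    rw [hls, Real.logb]; field_simp
  have hlpn : lp < 0 := Real.logb_neg one_lt_two hp0 hp1
  have hlqn : lq < 0 := Real.logb_neg one_lt_two h1p (by linarith)
  have hlrn : lr < 0 := Real.logb_neg one_lt_two hq0 hq1
  have hlsn : ls < 0 := Real.logb_neg one_lt_two hs0 hs1
  have hAnn : 0 ≤ -lp := by linarith
  have hBnn : 0 ≤ -lq := by linarith
  have hABnn : 0 ≤ -(lp + lq) := by linarith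
  -- multiplied log bounds in terms of logb
  have C1 : δ ≤ Real.log 2 * (lp - lr) * p := by
    have : Real.log 2 * (lp - lr) = Real.log p - Real.log (p - δ) := by
      rw [mul_sub, elp, elr]
    rw [this]
    have := (div_le_iff₀ hp0).mp A1
    linarith
  have C2 : Real.log 2 * (lp - lr) * (p - δ) ≤ δ := by
    have : Real.log 2 * (lp - lr) = Real.log p - Real.log (p - δ) := by
      rw [mul_sub, elp, elr]
    rw [this]
    have := (le_div_iff₀ hq0).mp A2
    linarith
  have C3 : δ ≤ Real.log 2 * (ls - lq) * (1 - p + δ) := by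
    have : Real.log 2 * (ls - lq) = Real.log (1 - p + δ) - Real.log (1 - p) := by
      rw [mul_sub, els, elq]
    rw [this]
    have := (div_le_iff₀ hs0).mp A3
    linarith
  -- key fact F2
  have F2 : δ * (p * (-lp) + (1 - p + δ) * (-lq))
      ≤ Real.log 2 * p * (1 - p + δ) * (lr * lq - lp * ls) := by
    nlinarith [mul_nonneg (mul_nonneg hs0.le hBnn) (sub_nonneg.2 C1),
      mul_nonneg (mul_nonneg hp0.le hAnn) (sub_nonneg.2 C3)]
  -- key fact F3
  have F3 : (p - δ) * (1 - p + δ) * Real.log 2 * (-(lp + lq + lr + ls))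
      ≤ δ * (1 - 2 * (p - δ)) + 2 * (p - δ) * (1 - p + δ) * (-(lp + lq)) := by
    have t1 : Real.log 2 * (lp - lr) * (p - δ) * (1 - p + δ) ≤ δ * (1 - p + δ) :=
      mul_le_mul_of_nonneg_right C2 hs0.le
    have t2 : δ * (p - δ) ≤ Real.log 2 * (ls - lq) * (1 - p + δ) * (p - δ) :=
      mul_le_mul_of_nonneg_right C3 hq0.le
    have t3 : (p - δ) * (1 - p + δ) * Real.log 2 * (-(lp + lq))
        ≤ (p - δ) * (1 - p + δ) * (-(lp + lq)) := by
      nlinarith [mul_nonneg (mul_nonneg (mul_nonneg hq0.le hs0.le) (sub_nonneg.2 hL2')) hABnn]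
    nlinarith [t1, t2, t3]
  have hD0 : 0 < -(lp + lq + lr + ls) := by linarith
  have hLden : 0 < δ * (1 - 2 * (p - δ)) - 2 * (p - δ) * (1 - p + δ) * (lp + lq) := by
    nlinarith [mul_pos (mul_pos (mul_pos hq0 hs0) hL2) hD0, F3]
  have hSnn : 0 ≤ δ * (p * (-lp) + (1 - p + δ) * (-lq)) :=
    mul_nonneg h0.le (add_nonneg (mul_nonneg hp0.le hAnn) (mul_nonneg hs0.le hBnn))
  have hNnn : 0 ≤ lr * lq - lp * ls := by
    nlinarith [mul_pos (mul_pos hL2 hp0) hs0, F2, hSnn]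
  have key : (1 - δ / p) *
        (δ * (-(p * lp) - (1 - p) * lq) - δ ^ 2 * lq) /
        (δ * (1 - 2 * (p - δ)) - 2 * (p - δ) * (1 - p + δ) * (lp + lq))
      ≤ (-(lp * ls - lr * lq)) / (-(lp + lq + lr + ls)) := by
    rw [div_le_div_iff₀ hLden hD0]
    have hfrac : 1 - δ / p = (p - δ) / p := by field_simp
    rw [hfrac, div_mul_eq_mul_div, div_mul_eq_mul_div, div_le_iff₀ hp0]
    nlinarith [mul_nonneg (mul_nonneg hp0.le hNnn) (sub_nonneg.2 F3),
      mul_nonneg (mul_nonneg hq0.le hD0.le) (sub_nonneg.2 F2)]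
  rw [neg_div_neg_eq] at key
  convert key using 2 <;> ring
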